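/- Let 0 < δ ≤ t* and let E : [δ, t*] → ℝ be continuous and nonnegative. Suppose there is a constant C_α ≥ 0 such that E(t) ≤ C_α t² + ∫_δ^t (0.6/s) · E(s) ds for all t ∈ [δ, t*]. Then E(t) ≤ (2/1.4) · C_α · t² = (10/7) · C_α · t² for all t ∈ [δ, t*]. -/

import Mathlib

noncomputable section

open MeasureTheory

/-- Gronwall estimate with kernel `0.6/s` and inhomogeneity `Cα·t²`:
if `E` is continuous, nonnegative on `[δ, t*]` and
`E(t) ≤ Cα·t² + ∫_δ^t (0.6/s)·E(s) ds`, then `E(t) ≤ (10/7)·Cα·t²` on `[δ, t*]`. -/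
theorem gronwall_t_squared
    (δ tstar : ℝ) (hδ : 0 < δ) (hδt : δ ≤ tstar)
    (E : ℝ → ℝ)
    (hEcont : ContinuousOn E (Set.Icc δ tstar))
    (hEnonneg : ∀ t ∈ Set.Icc δ tstar, 0 ≤ E t)
    (Cα : ℝ) (hCα : 0 ≤ Cα)
    (hineq : ∀ t ∈ Set.Icc δ tstar,
      E t ≤ Cα * t ^ 2 + ∫ s in δ..t, (0.6 / s) * E s) :
    ∀ t ∈ Set.Icc δ tstar, E t ≤ (10 / 7) * Cα * t ^ 2 := by
  -- a uniform bound on E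
  obtain ⟨M, hM⟩ : ∃ M, ∀ t ∈ Set.Icc δ tstar, E t ≤ M := by
    obtain ⟨M, hM⟩ := (isCompact_Icc.bddAbove_image hEcont)
    exact ⟨M, fun t ht => hM (Set.mem_image_of_mem E ht)⟩
  obtain ⟨A0, hA0def⟩ : ∃ A0 : ℝ, A0 = max M 0 / δ ^ 2 := ⟨_, rfl⟩
  have hδ2 : (0:ℝ) < δ ^ 2 := by positivity
  have hA0 : 0 ≤ A0 := hA0def ▸ div_nonneg (le_max_right _ _) hδ2.le
  obtain ⟨L, hLdef⟩ : ∃ L : ℝ, L = 10 / 7 * Cα := ⟨_, rfl⟩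
  obtain ⟨A, hAdef⟩ : ∃ A : ℕ → ℝ, ∀ n, A n = L + (0.3 : ℝ) ^ n * (A0 - L) :=
    ⟨_, fun _ => rfl⟩
  have hAnonneg : ∀ n, 0 ≤ A n := by
    intro n
    have h1 : (0.3:ℝ) ^ n ≤ 1 := pow_le_one₀ (by norm_num) (by norm_num)
    have h2 : (0:ℝ) ≤ (0.3:ℝ) ^ n := by positivity
    have hL : 0 ≤ L := by rw [hLdef]; positivity
    rw [hAdef]
    nlinarith
  have key : ∀ n, ∀ t ∈ Set.Icc δ tstar, E t ≤ A n * t ^ 2 := by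
    intro n
    induction n with
    | zero =>
      intro t ht
      have ht2 : δ ^ 2 ≤ t ^ 2 := pow_le_pow_left₀ hδ.le ht.1 2
      have : A 0 * δ ^ 2 ≤ A 0 * t ^ 2 := mul_le_mul_of_nonneg_left ht2 (hAnonneg 0)
      have hA0δ : A 0 * δ ^ 2 = max M 0 := by
        rw [hAdef, hA0def, pow_zero, one_mul]
        field_simp
        ring
      calc E t ≤ M := hM t ht
        _ ≤ max M 0 := le_max_left _ _
        _ = A 0 * δ ^ 2 := hA0δ.symm
        _ ≤ A 0 * t ^ 2 := this
    | succ n ih =>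
      intro t ht
      have htδ : δ ≤ t := ht.1
      have hsub : Set.Icc δ t ⊆ Set.Icc δ tstar := Set.Icc_subset_Icc le_rfl ht.2
      -- integrability
      have hcont1 : ContinuousOn (fun s => (0.6 / s) * E s) (Set.Icc δ t) := by
        apply ContinuousOn.mul
        · exact continuousOn_const.div continuousOn_id
            (fun s hs => ne_of_gt (lt_of_lt_of_le hδ hs.1))
        · exact hEcont.mono hsub
      have hint1 : IntervalIntegrable (fun s => (0.6 / s) * E s) volume δ t := by
        apply ContinuousOn.intervalIntegrable
        rwa [Set.uIcc_of_le htδ]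
      have hint2 : IntervalIntegrable (fun s => 0.6 * A n * s) volume δ t :=
        (continuous_const.mul continuous_id).intervalIntegrable δ t
      have hmono : ∫ s in δ..t, (0.6 / s) * E s ≤ ∫ s in δ..t, 0.6 * A n * s := by
        apply intervalIntegral.integral_mono_on htδ hint1 hint2
        intro s hs
        have hspos : 0 < s := lt_of_lt_of_le hδ hs.1
        have hEs : E s ≤ A n * s ^ 2 := ih s (hsub hs)
        have h1 : (0.6 / s) * E s ≤ (0.6 / s) * (A n * s ^ 2) :=
          mul_le_mul_of_nonneg_left hEs (by positivity)
        have h2 : (0.6 / s) * (A n * s ^ 2) = 0.6 * A n * s := by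
          field_simp
        linarith [h1, h2.le]
      have hval : ∫ s in δ..t, 0.6 * A n * s = 0.6 * A n * ((t ^ 2 - δ ^ 2) / 2) := by
        rw [intervalIntegral.integral_const_mul, integral_id]
      have hstep : E t ≤ Cα * t ^ 2 + 0.6 * A n * ((t ^ 2 - δ ^ 2) / 2) := by
        have := hineq t ht
        linarith [this, hmono, hval.le, hval.ge]
      have h3 : 0.6 * A n * ((t ^ 2 - δ ^ 2) / 2) ≤ 0.3 * A n * t ^ 2 := by
        have heq : 0.6 * A n * ((t ^ 2 - δ ^ 2) / 2)
            = 0.3 * A n * t ^ 2 - 0.3 * (A n * δ ^ 2) := by ring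
        have hnn : 0 ≤ A n * δ ^ 2 := mul_nonneg (hAnonneg n) hδ2.le
        linarith
      have hAr : A (n + 1) = Cα + 0.3 * A n := by
        rw [hAdef, hAdef, hLdef, pow_succ]; ring
      rw [hAr]
      nlinarith [hstep, h3]
  -- take the limit n → ∞
  intro t ht
  have hlim : Filter.Tendsto (fun n => A n * t ^ 2) Filter.atTop (nhds (L * t ^ 2)) := by
    have h03 : Filter.Tendsto (fun n : ℕ => (0.3:ℝ) ^ n) Filter.atTop (nhds 0) :=
      tendsto_pow_atTop_nhds_zero_of_lt_one (by norm_num) (by norm_num)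
    have : Filter.Tendsto (fun n => A n) Filter.atTop (nhds L) := by
      have h := (h03.mul_const (A0 - L)).const_add L
      simp only [hAdef]
      simpa using h
    simpa using this.mul_const (t ^ 2)
  have := ge_of_tendsto hlim (Filter.Eventually.of_forall (fun n => key n t ht))
  simpa [hLdef, mul_assoc] using this
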